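/- arXiv:2309.08149 — 3 statements merged into one kernel-verified Lean document; each statement's English description precedes it below -/
import Mathlib

section
/- If a square matrix A satisfies A'PA - P = -Q for some positive definite matrices P and Q, then every eigenvalue of A has absolute value strictly less than 1. -/
open Matrix

lemma re_dotProduct_map_pos {n : ℕ} {P : Matrix (Fin n) (Fin n) ℝ} (hP : P.PosDef)
    (v : Fin n → ℂ) (hv : v ≠ 0) :
    0 < (star v ⬝ᵥ (P.map (algebraMap ℝ ℂ)) *ᵥ v).re := by
  set x : Fin n → ℝ := fun i => (v i).re with hx
  set y : Fin n → ℝ := fun i => (v i).im with hy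
  have key : (star v ⬝ᵥ (P.map (algebraMap ℝ ℂ)) *ᵥ v).re
      = x ⬝ᵥ P *ᵥ x + y ⬝ᵥ P *ᵥ y := by
    simp only [dotProduct, mulVec, Pi.star_apply, map_apply, Finset.mul_sum,
      Complex.re_sum, Complex.mul_re, Complex.ofReal_re, Complex.ofReal_im,
      RCLike.star_def, Complex.conj_re, Complex.conj_im, algebraMap_apply,
      Algebra.algebraMap_self, RingHom.id_apply, Complex.coe_algebraMap]
    rw [← Finset.sum_add_distrib]
    refine Finset.sum_congr rfl fun i _ => ?_
    rw [← Finset.sum_add_distrib]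
    refine Finset.sum_congr rfl fun j _ => ?_
    simp only [hx, hy, Complex.mul_im, Complex.ofReal_re, Complex.ofReal_im]
    ring
  have hxy : x ≠ 0 ∨ y ≠ 0 := by
    by_contra hc
    push_neg at hc
    apply hv
    funext i
    have h1 : x i = 0 := by rw [hc.1]; rfl
    have h2 : y i = 0 := by rw [hc.2]; rfl
    exact Complex.ext h1 h2
  have hxnn : ∀ z : Fin n → ℝ, 0 ≤ z ⬝ᵥ P *ᵥ z := fun z => by
    simpa using hP.posSemidef.dotProduct_mulVec_nonneg z
  have hxp : ∀ z : Fin n → ℝ, z ≠ 0 → 0 < z ⬝ᵥ P *ᵥ z := fun z hz => by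
    simpa using hP.dotProduct_mulVec_pos hz
  rw [key]
  rcases hxy with hx0 | hy0
  · have := hxp x hx0
    have := hxnn y
    linarith
  · have := hxp y hy0
    have := hxnn x
    linarith

/-- Discrete Lyapunov theorem: if AᵀPA - P = -Q with P, Q symmetric positive definite,
then every complex eigenvalue of A has modulus < 1. -/
theorem lyapunov_schur_stable {n : ℕ} (A P Q : Matrix (Fin n) (Fin n) ℝ)
    (hP : P.PosDef) (hQ : Q.PosDef)
    (h : Aᵀ * P * A - P = -Q) :
    ∀ μ : ℂ, μ ∈ spectrum ℂ (A.map (algebraMap ℝ ℂ)) → ‖μ‖ < 1 := by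
  intro μ hμ
  set f := algebraMap ℝ ℂ
  set B := A.map f with hB
  set Pc := P.map f with hPc
  set Qc := Q.map f with hQc
  -- obtain eigenvector
  rw [spectrum.mem_iff] at hμ
  rw [Matrix.isUnit_iff_isUnit_det, isUnit_iff_ne_zero, not_not] at hμ
  obtain ⟨v, hv, hveq⟩ := (Matrix.exists_mulVec_eq_zero_iff).2 hμ
  have heig : B *ᵥ v = μ • v := by
    have h1 : (algebraMap ℂ (Matrix (Fin n) (Fin n) ℂ) μ - B) *ᵥ v
        = μ • v - B *ᵥ v := by
      rw [Matrix.sub_mulVec]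
      congr 1
      ext i
      simp [Matrix.algebraMap_eq_diagonal, Matrix.mulVec_diagonal]
    rw [h1] at hveq
    exact (sub_eq_zero.mp hveq).symm
  -- complexified Lyapunov equation
  have hmap : Bᴴ * Pc * B - Pc = -Qc := by
    have hAT : Bᴴ = Aᵀ.map f := by
      ext i j
      simp [hB, conjTranspose_apply, f, Complex.conj_ofReal]
    have h2 : f.mapMatrix (Aᵀ * P * A - P) = f.mapMatrix (-Q) := by rw [h]
    rw [map_sub, map_neg, _root_.map_mul, _root_.map_mul] at h2
    simp only [RingHom.mapMatrix_apply] at h2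
    rw [hAT, hPc, hQc, hB]
    exact h2
  set p : ℂ := star v ⬝ᵥ Pc *ᵥ v with hp
  set q : ℂ := star v ⬝ᵥ Qc *ᵥ v with hq
  have e1 : star v ⬝ᵥ ((Bᴴ * Pc * B) *ᵥ v) = (starRingEnd ℂ μ * μ) * p := by
    rw [← Matrix.mulVec_mulVec, ← Matrix.mulVec_mulVec]
    rw [Matrix.dotProduct_mulVec, ← Matrix.star_mulVec, heig]
    rw [star_smul, smul_dotProduct, Matrix.mulVec_smul, dotProduct_smul]
    simp [hp, mul_assoc]
  have e2 : (starRingEnd ℂ μ * μ) * p - p = -q := by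
    have := congrArg (fun M => star v ⬝ᵥ M *ᵥ v) hmap
    simp only [Matrix.sub_mulVec, Matrix.neg_mulVec, dotProduct_sub,
      dotProduct_neg] at this
    rw [e1] at this
    exact this
  have hmu : starRingEnd ℂ μ * μ = (Complex.normSq μ : ℂ) := by
    rw [mul_comm, Complex.mul_conj]
  rw [hmu] at e2
  have ere : Complex.normSq μ * p.re - p.re = -q.re := by
    have := congrArg Complex.re e2
    simpa [Complex.sub_re, Complex.mul_re, Complex.neg_re] using this
  have hppos : 0 < p.re := re_dotProduct_map_pos hP v hv
  have hqpos : 0 < q.re := re_dotProduct_map_pos hQ v hv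
  have hns : Complex.normSq μ < 1 := by nlinarith
  have habs : ‖μ‖ ^ 2 = Complex.normSq μ := Complex.sq_norm μ
  nlinarith [norm_nonneg μ]
end

section
/- For a real square matrix A, if there exists a positive definite matrix P such that A'PA - P is negative definite, then A is Schur stable, i.e., the spectral radius of A is strictly less than 1. -/
open Matrix

/-- A real matrix `A` is Schur stable: every complex eigenvalue has modulus < 1. -/
def SchurStable {n : Type*} [Fintype n] [DecidableEq n] (A : Matrix n n ℝ) : Prop :=
  ∀ μ : ℂ, μ ∈ spectrum ℂ (A.map (algebraMap ℝ ℂ)) → ‖μ‖ < 1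

private lemma re_dot_map_aux {n : ℕ} (R : Matrix (Fin n) (Fin n) ℝ) (x : Fin n → ℂ) :
    (star x ⬝ᵥ (R.map (algebraMap ℝ ℂ)) *ᵥ x).re
      = (fun i => (x i).re) ⬝ᵥ R *ᵥ (fun i => (x i).re)
      + (fun i => (x i).im) ⬝ᵥ R *ᵥ (fun i => (x i).im) := by
  simp only [dotProduct, mulVec, Pi.star_apply, Complex.re_sum, Complex.mul_re, map_apply,
    Complex.star_def, Complex.conj_re, Complex.conj_im, Complex.im_sum,
    Finset.mul_sum, Finset.sum_mul]
  rw [← Finset.sum_add_distrib]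
  refine Finset.sum_congr rfl fun i _ => ?_
  rw [← Finset.sum_add_distrib]
  refine Finset.sum_congr rfl fun j _ => ?_
  simp [Complex.mul_re]

private lemma re_dot_pos_aux {n : ℕ} {R : Matrix (Fin n) (Fin n) ℝ} (hR : R.PosDef)
    {x : Fin n → ℂ} (hx : x ≠ 0) :
    0 < (star x ⬝ᵥ (R.map (algebraMap ℝ ℂ)) *ᵥ x).re := by
  rw [re_dot_map_aux]
  have hor : (fun i => (x i).re) ≠ 0 ∨ (fun i => (x i).im) ≠ 0 := by
    by_contra hc
    push_neg at hc
    exact hx (funext fun i => Complex.ext (congrFun hc.1 i) (congrFun hc.2 i))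
  have h1 := hR.posSemidef.dotProduct_mulVec_nonneg (fun i => (x i).re)
  have h2 := hR.posSemidef.dotProduct_mulVec_nonneg (fun i => (x i).im)
  simp only [star_trivial] at h1 h2
  rcases hor with h | h
  · have := hR.dotProduct_mulVec_pos h; simp only [star_trivial] at this; linarith
  · have := hR.dotProduct_mulVec_pos h; simp only [star_trivial] at this; linarith

private lemma im_dot_zero_aux {n : ℕ} {R : Matrix (Fin n) (Fin n) ℝ} (hR : R.IsHermitian)
    (x : Fin n → ℂ) :
    (star x ⬝ᵥ (R.map (algebraMap ℝ ℂ)) *ᵥ x).im = 0 := by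
  set M := R.map (algebraMap ℝ ℂ) with hM
  have hH : M.IsHermitian := hR.map _ (fun r => by simp)
  have hc : (starRingEnd ℂ) (star x ⬝ᵥ M *ᵥ x) = star x ⬝ᵥ M *ᵥ x := by
    calc (starRingEnd ℂ) (star x ⬝ᵥ M *ᵥ x)
        = star (star x) ⬝ᵥ star (M *ᵥ x) := by
          rw [star_dotProduct_star, dotProduct_comm]; rfl
      _ = (star x ᵥ* Mᴴ) ⬝ᵥ x := by rw [star_star, star_mulVec, dotProduct_comm]
      _ = star x ⬝ᵥ M *ᵥ x := by rw [← dotProduct_mulVec, hH.eq]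
  exact Complex.conj_eq_iff_im.mp hc

/-- If there exists a symmetric positive definite `P` with `AᵀPA - P` negative definite,
then `A` is Schur stable. -/
theorem lyapunov_ineq_schur_stable {n : ℕ} (A : Matrix (Fin n) (Fin n) ℝ)
    (h : ∃ P : Matrix (Fin n) (Fin n) ℝ, P.PosDef ∧ (-(Aᵀ * P * A - P)).PosDef) :
    SchurStable A := by
  obtain ⟨P, hP, hQ⟩ := h
  intro μ hμ
  set M := A.map (algebraMap ℝ ℂ) with hM
  -- extract an eigenvector
  rw [spectrum.mem_iff] at hμ
  have hdet : (algebraMap ℂ (Matrix (Fin n) (Fin n) ℂ) μ - M).det = 0 := by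
    by_contra hd
    exact hμ ((isUnit_iff_isUnit_det _).mpr (isUnit_iff_ne_zero.mpr hd))
  obtain ⟨v, hv0, hv⟩ := (Matrix.exists_mulVec_eq_zero_iff).mpr hdet
  have heig : M *ᵥ v = μ • v := by
    rw [sub_mulVec] at hv
    have h2 : (algebraMap ℂ (Matrix (Fin n) (Fin n) ℂ) μ) *ᵥ v = μ • v := by
      funext i; simp [Matrix.algebraMap_eq_diagonal, mulVec_diagonal]
    rw [h2] at hv
    linear_combination (norm := module) -hv
  -- complexified matrices
  set Pc : Matrix (Fin n) (Fin n) ℂ := P.map (algebraMap ℝ ℂ) with hPc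
  set Qc : Matrix (Fin n) (Fin n) ℂ := (-(Aᵀ * P * A - P)).map (algebraMap ℝ ℂ) with hQc
  have hQc' : Qc = Pc - Mᴴ * Pc * M := by
    have hAT : (Aᵀ).map (algebraMap ℝ ℂ) = Mᴴ := by
      ext i j
      simp [conjTranspose_apply, hM]
    rw [hQc, hPc, ← hAT, hM]
    rw [neg_sub]
    rw [Matrix.map_sub _ (fun a b => by simp)]
    congr 1
    rw [Matrix.map_mul, Matrix.map_mul]
  -- the quadratic forms
  set c : ℂ := star v ⬝ᵥ Pc *ᵥ v with hc
  have hcre : 0 < c.re := re_dot_pos_aux hP hv0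
  have hcim : c.im = 0 := im_dot_zero_aux hP.1 v
  have hqre : 0 < (star v ⬝ᵥ Qc *ᵥ v).re := re_dot_pos_aux hQ hv0
  have hkey : star v ⬝ᵥ Qc *ᵥ v = (1 - (Complex.normSq μ : ℂ)) * c := by
    rw [hQc', sub_mulVec, dotProduct_sub, ← hc]
    have h3 : star v ⬝ᵥ (Mᴴ * Pc * M) *ᵥ v = star (M *ᵥ v) ⬝ᵥ Pc *ᵥ (M *ᵥ v) := by
      rw [star_mulVec, ← mulVec_mulVec, ← mulVec_mulVec, dotProduct_mulVec (star v)]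
    rw [h3, heig]
    rw [star_smul, smul_dotProduct, mulVec_smul, dotProduct_smul, ← hc]
    rw [smul_eq_mul, smul_eq_mul, ← mul_assoc]
    rw [show (star μ) * μ = (Complex.normSq μ : ℂ) by
      rw [mul_comm]; exact Complex.mul_conj μ]
    ring
  have hqre' : (star v ⬝ᵥ Qc *ᵥ v).re = (1 - Complex.normSq μ) * c.re := by
    rw [hkey]
    simp [Complex.mul_re, hcim, Complex.sub_im, Complex.sub_re]
  rw [hqre'] at hqre
  have hlt : Complex.normSq μ < 1 := by nlinarith
  have habs : ‖μ‖ ^ 2 < 1 := by rwa [Complex.sq_norm]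
  nlinarith [norm_nonneg μ]
end

section
/- For a real n×n matrix A and symmetric positive definite P, the inequality A'PA - P < 0 holds if and only if the block matrix [[-P, A'P], [PA, -P]] is negative definite. -/
open Matrix

lemma posDef_of_posSemidef_det_ne_zero {m : Type*} [Fintype m] [DecidableEq m]
    {M : Matrix m m ℝ} (hM : M.PosSemidef) (hd : M.det ≠ 0) : M.PosDef := by
  refine posDef_iff_dotProduct_mulVec.mpr ⟨hM.1, fun x hx => ?_⟩
  rcases ((posSemidef_iff_dotProduct_mulVec.mp hM).2 x).lt_or_eq with h | h
  · exact h
  · exfalso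
    have h0 : M *ᵥ x = 0 := (hM.dotProduct_mulVec_zero_iff x).mp h.symm
    have hu : IsUnit M.det := isUnit_iff_ne_zero.mpr hd
    have : x = 0 := by
      have := congrArg (fun v => M⁻¹ *ᵥ v) h0
      simpa [mulVec_mulVec, Matrix.nonsing_inv_mul M hu] using this
    exact hx this

/-- For `P` symmetric positive definite, `AᵀPA - P < 0` iff the block matrix
`[[-P, AᵀP], [PA, -P]]` is negative definite. -/
theorem lyapunov_ineq_iff_block_negdef {n : ℕ} (A P : Matrix (Fin n) (Fin n) ℝ)
    (hP : P.PosDef) :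
    (-(Aᵀ * P * A - P)).PosDef ↔
      (-(fromBlocks (-P) (Aᵀ * P) (P * A) (-P))).PosDef := by
  have hPdet : IsUnit P.det := isUnit_iff_ne_zero.mpr hP.det_pos.ne'
  have : Invertible P := P.invertibleOfIsUnitDet hPdet
  set B : Matrix (Fin n) (Fin n) ℝ := -(Aᵀ * P)
  have hBH : Bᴴ = -(P * A) := by
    simp [B, conjTranspose_neg, conjTranspose_mul, hP.1.eq]
    rw [show Pᵀ = P from (P.conjTranspose_eq_transpose_of_trivial ▸ hP.1.eq)]
  have hblock : -(fromBlocks (-P) (Aᵀ * P) (P * A) (-P)) = fromBlocks P B Bᴴ P := by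
    rw [hBH]; simp [B, fromBlocks_neg]
  have hschur : P - B * P⁻¹ * Bᴴ = -(Aᵀ * P * A - P) := by
    rw [hBH]
    simp only [B, Matrix.neg_mul, Matrix.mul_neg, neg_neg, neg_sub]
    congr 1
    rw [Matrix.mul_assoc (Aᵀ * P), Matrix.nonsing_inv_mul_cancel_left P _ hPdet,
      Matrix.mul_assoc]
  have hdet : (fromBlocks P B Bᴴ P).det = P.det * (P - B * P⁻¹ * Bᴴ).det := by
    rw [det_fromBlocks₂₂]
    congr 2
    rw [Matrix.invOf_eq_nonsing_inv]
  have hsemi : (fromBlocks P B Bᴴ P).PosSemidef ↔ (-(Aᵀ * P * A - P)).PosSemidef := by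
    rw [PosDef.fromBlocks₂₂ _ _ hP, hschur]
  rw [hblock]
  constructor
  · intro hX
    refine posDef_of_posSemidef_det_ne_zero (hsemi.mpr hX.posSemidef) ?_
    rw [hdet, hschur]
    exact mul_ne_zero hP.det_pos.ne' hX.det_pos.ne'
  · intro hM
    refine posDef_of_posSemidef_det_ne_zero (hsemi.mp hM.posSemidef) ?_
    intro h
    apply hM.det_pos.ne'
    rw [hdet, hschur, h, mul_zero]
end
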